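/- Let X be a cellular multipointed d-space. A continuous map [0,1] → |X| is a directed path of X (i.e. of Sp(X)) if and only if it is of the form γ∘φ where γ is either an execution path of X or a constant path and φ : [0,1] → [0,1] is a non-decreasing continuous map. -/

import Mathlib

/- STATEMENT 14: Let X be a cellular multipointed d-space. A continuous map
[0,1] → |X| is a directed path of X (i.e. of Sp(X)) iff it is of the form γ∘φ with γ an
execution path of X or a constant path, and φ a non-decreasing continuous self-map of
[0,1]. -/

open Set unitInterval

noncomputable section

variable {α : Type*} {β : Type*} [TopologicalSpace α] [TopologicalSpace β]

/-- Clamp a real number into the unit interval. -/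
def toI (t : ℝ) : I := Set.projIcc 0 1 zero_le_one t

/-- Normalized composition of two paths parametrized by [0,1]. -/
def normComp (γ₁ γ₂ : I → α) : I → α :=
  fun t => if (t : ℝ) ≤ 1 / 2 then γ₁ (toI (2 * (t : ℝ))) else γ₂ (toI (2 * (t : ℝ) - 1))

/-- An element of `M(1,1)`: a non-decreasing (continuous) surjection of [0,1]. -/
def IsReparam (φ : I → I) : Prop := Monotone φ ∧ Function.Surjective φ ∧ Continuous φ

/-- An element of `𝓘(1)`: a non-decreasing continuous map [0,1] → [0,1],
not necessarily surjective. -/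
def IsNondecreasing (φ : I → I) : Prop := Monotone φ ∧ Continuous φ

/-- A multipointed d-space: a space, a set of states, and a set of execution paths with
endpoints in the states, closed under non-decreasing surjective reparametrization and
under normalized composition. -/
structure MultipointedDSpace (α : Type*) [TopologicalSpace α] where
  states : Set α
  exec : Set (I → α)
  exec_cont : ∀ γ ∈ exec, Continuous γ
  exec_src : ∀ γ ∈ exec, γ 0 ∈ states
  exec_tgt : ∀ γ ∈ exec, γ 1 ∈ states
  exec_reparam : ∀ γ ∈ exec, ∀ φ : I → I, IsReparam φ → γ ∘ φ ∈ exec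
  exec_norm : ∀ γ₁ ∈ exec, ∀ γ₂ ∈ exec, γ₁ 1 = γ₂ 0 → normComp γ₁ γ₂ ∈ exec

/-- Moore composition of a path of length `ℓ₁` with a second path. -/
def mooreComp (ℓ₁ : ℝ) (f g : ℝ → α) : ℝ → α := fun t => if t ≤ ℓ₁ then f t else g (t - ℓ₁)

/-- `(n+1)`-fold Moore composition with prescribed lengths. -/
def mooreCompN : (n : ℕ) → (Fin (n + 1) → ℝ) → (Fin (n + 1) → ℝ → α) → ℝ → α
  | 0, _, f => f 0
  | n + 1, ℓ, f =>
      mooreComp (ℓ 0) (f 0) (mooreCompN n (fun i => ℓ i.succ) (fun i => f i.succ))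

/-- `d(X)`: the set of all constant paths together with all Moore compositions
`(γ₁∘φ₁∘μ_{ℓ₁}) * ⋯ * (γₙ∘φₙ∘μ_{ℓₙ})` with `Σ ℓᵢ = 1`, where the `γᵢ` are execution
paths and the `φᵢ` are non-decreasing continuous self-maps of [0,1]
(`μ_ℓ(t) = t/ℓ`). -/
def dPaths (X : MultipointedDSpace α) : Set (I → α) :=
  {Γ | (∃ x, ∀ t, Γ t = x) ∨
    ∃ (n : ℕ) (ℓ : Fin (n + 1) → ℝ) (γ : Fin (n + 1) → I → α) (φ : Fin (n + 1) → I → I),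
      (∀ i, 0 < ℓ i) ∧ (∑ i, ℓ i = 1) ∧ (∀ i, γ i ∈ X.exec) ∧
      (∀ i, IsNondecreasing (φ i)) ∧
      ∀ t : I, Γ t = mooreCompN n ℓ (fun i s => γ i (φ i (toI (s / ℓ i)))) (t : ℝ)}

/-- A globular cell of a multipointed d-space `X`, of dimension `n + 1`: the data of an
attaching map `Glob^top(D^n) → X` (written as `g : D^n × [0,1] → α`, constant on
`D^n × {0}` and on `D^n × {1}`), injective on the open part, whose longitudinal paths
are execution paths of `X`. -/
structure GlobularCell (X : MultipointedDSpace α) where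
  n : ℕ
  g : EuclideanSpace ℝ (Fin n) → I → α
  src : α
  tgt : α
  src_mem : src ∈ X.states
  tgt_mem : tgt ∈ X.states
  g_src : ∀ z : EuclideanSpace ℝ (Fin n), ‖z‖ ≤ 1 → g z 0 = src
  g_tgt : ∀ z : EuclideanSpace ℝ (Fin n), ‖z‖ ≤ 1 → g z 1 = tgt
  g_cont : ContinuousOn (fun p : EuclideanSpace ℝ (Fin n) × I => g p.1 p.2)
    ((Metric.closedBall 0 1) ×ˢ univ)
  exec_mem : ∀ z : EuclideanSpace ℝ (Fin n), ‖z‖ ≤ 1 → (fun t => g z t) ∈ X.exec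
  g_inj : ∀ (z z' : EuclideanSpace ℝ (Fin n)) (t t' : I), ‖z‖ < 1 → ‖z'‖ < 1 →
    0 < (t : ℝ) → (t : ℝ) < 1 → 0 < (t' : ℝ) → (t' : ℝ) < 1 →
    g z t = g z' t' → z = z' ∧ t = t'

/-- The (open) globular cell: the image of `|Glob(D^n)| ∖ |Glob(S^{n-1})|`. -/
def GlobularCell.openCell {X : MultipointedDSpace α} (c : GlobularCell X) : Set α :=
  {x | ∃ (z : EuclideanSpace ℝ (Fin c.n)) (t : I),
    ‖z‖ < 1 ∧ 0 < (t : ℝ) ∧ (t : ℝ) < 1 ∧ c.g z t = x}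

/-- A cellular multipointed d-space: a multipointed d-space obtained by (transfinitely)
attaching globular cells to its set of states. The underlying space is Hausdorff, it is
partitioned into the states and the open globular cells, and every execution path
decomposes (uniquely) as its globular naturalization — a Moore composition of
longitudinal cell paths, each of length 1 — precomposed with a non-decreasing
continuous surjection [0,1] → [0,n+1]. -/
structure CellularMDSpace (α : Type*) [TopologicalSpace α]
    extends MultipointedDSpace α where
  t2 : T2Space α
  ι : Type*
  cell : ι → GlobularCell toMultipointedDSpace
  cell_disjoint : Pairwise fun i j => Disjoint (cell i).openCell (cell j).openCell
  cell_states_disjoint : ∀ i, Disjoint (cell i).openCell states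
  cell_cover : states ∪ ⋃ i, (cell i).openCell = univ
  exec_decomp : ∀ γ ∈ exec, ∃ (n : ℕ) (c : Fin (n + 1) → ι)
      (z : ∀ i : Fin (n + 1), EuclideanSpace ℝ (Fin (cell (c i)).n)) (φ : I → ℝ),
      (∀ i, ‖z i‖ < 1) ∧ Monotone φ ∧ Continuous φ ∧
      φ 0 = 0 ∧ φ 1 = (n + 1 : ℝ) ∧
      ∀ t : I, γ t = mooreCompN n (fun _ => 1)
        (fun i s => (cell (c i)).g (z i) (toI s)) (φ t)

/- ## Basic lemmas about toI -/

lemma toI_coe (t : I) : toI (t : ℝ) = t := Set.projIcc_val zero_le_one t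

lemma toI_coe_of_mem {x : ℝ} (h0 : 0 ≤ x) (h1 : x ≤ 1) : ((toI x : I) : ℝ) = x := by
  rw [toI, Set.projIcc_of_mem zero_le_one ⟨h0, h1⟩]

lemma toI_zero : toI 0 = 0 := by simpa using toI_coe 0

lemma toI_one : toI 1 = 1 := by simpa using toI_coe 1

lemma toI_mono : Monotone toI := monotone_projIcc zero_le_one

lemma toI_cont : Continuous toI := continuous_projIcc (h := zero_le_one)

/- ## Evaluation lemmas for uniform-length Moore compositions -/

lemma mooreCompN_head (n : ℕ) (ℓ : Fin (n+1) → ℝ) (f : Fin (n+1) → ℝ → α) (s : ℝ)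
    (hs : s ≤ ℓ 0) : mooreCompN n ℓ f s = f 0 s := by
  cases n with
  | zero => rfl
  | succ n => simp [mooreCompN, mooreComp, hs]

lemma mooreCompN_eval (n : ℕ) (f : Fin (n+1) → ℝ → α) (j : ℕ) (hj : j ≤ n)
    (s : ℝ) (h1 : (j : ℝ) < s) (h2 : s ≤ (j : ℝ) + 1) :
    mooreCompN n (fun _ => 1) f s = f ⟨j, by omega⟩ (s - j) := by
  induction n generalizing j s with
  | zero =>
    interval_cases j
    · simp [mooreCompN]
  | succ n ih =>
    show mooreComp 1 (f 0) _ s = _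
    rcases Nat.eq_zero_or_pos j with rfl | hjpos
    · have : s ≤ 1 := by simpa using h2
      simp only [mooreComp, if_pos this]
      norm_num
    · have hs1 : ¬ s ≤ 1 := by
        push_neg
        have : (1 : ℝ) ≤ (j : ℝ) := by exact_mod_cast hjpos
        linarith
      simp only [mooreComp, if_neg hs1]
      have hrec := ih (fun i => f i.succ) (j - 1) (by omega) (s - 1)
        (by push_cast [Nat.cast_sub hjpos]; linarith)
        (by push_cast [Nat.cast_sub hjpos]; linarith)
      rw [hrec]
      show f (Fin.mk (j-1) (by omega) : Fin (n+1)).succ _ = _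
      have hsucc : (Fin.mk (j-1) (by omega) : Fin (n+1)).succ = ⟨j, by omega⟩ := by
        simp only [Fin.succ_mk, Fin.mk.injEq]; omega
      rw [hsucc]
      congr 1
      push_cast [Nat.cast_sub hjpos]
      ring
set_option linter.unusedSectionVars false

lemma coe_mono : Monotone (fun t : I => (t : ℝ)) := fun _ _ h => h

lemma surj_of_mono_cont (sg : I → I) (hm : Monotone sg) (hc : Continuous sg)
    (h0 : sg 0 = 0) (h1 : sg 1 = 1) : Function.Surjective sg := by
  intro y
  have hf : Continuous (fun x : ℝ => ((sg (toI x) : I) : ℝ)) :=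
    continuous_subtype_val.comp (hc.comp toI_cont)
  have hsub := intermediate_value_Icc (zero_le_one) hf.continuousOn
  have h0' : ((sg (toI 0) : I) : ℝ) = 0 := by rw [toI_zero, h0]; rfl
  have h1' : ((sg (toI 1) : I) : ℝ) = 1 := by rw [toI_one, h1]; rfl
  rw [h0', h1'] at hsub
  obtain ⟨t, _, ht⟩ := hsub ⟨y.2.1, y.2.2⟩
  exact ⟨toI t, Subtype.ext ht⟩

lemma uniformExec (X : MultipointedDSpace α) :
    ∀ (n : ℕ) (P : Fin (n+1) → I → α), (∀ i, P i ∈ X.exec) →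
    (∀ i : ℕ, (h : i < n) → P ⟨i, by omega⟩ 1 = P ⟨i+1, by omega⟩ 0) →
    (fun t : I => mooreCompN n (fun _ => 1) (fun i s => P i (toI s)) (((n:ℝ)+1) * t)) ∈ X.exec := by
  intro n
  induction n with
  | zero =>
    intro P hP _
    have : (fun t : I => mooreCompN 0 (fun _ => 1) (fun i s => P i (toI s)) ((((0:ℕ):ℝ)+1) * t))
        = P 0 := by
      funext t
      show P 0 (toI _) = P 0 t
      norm_num [toI_coe]
    rw [this]
    exact hP 0
  | succ n ih =>
    intro P hP hadj
    set m : ℝ := (n : ℝ) + 1 with hm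
    have hm0 : (0:ℝ) < m := by positivity
    clear_value m
    -- the tail path
    set U' : I → α := fun t : I =>
      mooreCompN n (fun _ => 1) (fun i s => P i.succ (toI s)) (m * t) with hU'def
    have hU' : U' ∈ X.exec := by
      apply ih (fun i => P i.succ) (fun i => hP i.succ)
      intro i h
      show P (Fin.mk i (by omega) : Fin (n+1)).succ 1 = P (Fin.mk (i+1) (by omega) : Fin (n+1)).succ 0
      rw [Fin.succ_mk, Fin.succ_mk]
      exact hadj (i+1) (by omega)
    have hend : P 0 1 = U' 0 := by
      have : U' 0 = P (0 : Fin (n+1)).succ (toI (m * ((0:I):ℝ))) :=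
        mooreCompN_head n _ _ _ (by rw [show ((0:I):ℝ) = 0 from rfl]; linarith)
      rw [this]
      have h00 : (m * ((0:I):ℝ)) = 0 := by rw [show ((0:I):ℝ) = 0 from rfl]; ring
      rw [h00, toI_zero, Fin.succ_zero_eq_one]
      have := hadj 0 (by omega)
      simpa [Fin.succ_zero_eq_one] using this
    -- the reparametrization
    set r : ℝ → ℝ := fun x => if (m+1)*x ≤ 1 then (m+1)*x/2 else 1/2 + ((m+1)*x - 1)/(2*m)
      with hrdef
    clear_value r
    have hr_mono : Monotone r := by
      intro x y hxy
      have hxy' : (m+1)*x ≤ (m+1)*y := by nlinarith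
      simp only [hrdef]
      by_cases hx : (m+1)*x ≤ 1 <;> by_cases hy : (m+1)*y ≤ 1
      · rw [if_pos hx, if_pos hy]; linarith
      · rw [if_pos hx, if_neg hy]
        have h2 : (0:ℝ) ≤ ((m+1)*y - 1)/(2*m) := by
          apply div_nonneg
          · linarith [not_le.mp hy]
          · linarith
        linarith
      · exact absurd (le_trans hxy' hy) hx
      · rw [if_neg hx, if_neg hy]
        have : ((m+1)*x - 1)/(2*m) ≤ ((m+1)*y - 1)/(2*m) := by gcongr
        linarith
    have hr_cont : Continuous r := by
      rw [hrdef]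
      apply Continuous.if_le (by fun_prop) (by fun_prop) (by fun_prop) continuous_const
      intro x hx
      rw [hx]
      field_simp
      ring
    set sg : I → I := fun t => toI (r t) with hsgdef
    have hsg_mono : Monotone sg := fun s t h => toI_mono (hr_mono h)
    have hsg_cont : Continuous sg := toI_cont.comp (hr_cont.comp continuous_subtype_val)
    have hr0 : r ((0:I):ℝ) = 0 := by
      rw [hrdef]
      beta_reduce
      rw [show ((0:I):ℝ) = 0 from rfl]
      norm_num
    have hr1 : r ((1:I):ℝ) = 1 := by
      rw [hrdef]
      beta_reduce
      rw [show ((1:I):ℝ) = 1 from rfl, if_neg (by rw [not_le]; linarith)]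
      field_simp
      ring
    have hsg_surj : Function.Surjective sg :=
      surj_of_mono_cont sg hsg_mono hsg_cont
        (by show toI _ = 0; rw [hr0, toI_zero])
        (by show toI _ = 1; rw [hr1, toI_one])
    have hnorm := X.exec_norm (P 0) (hP 0) U' hU' hend
    have hfinal := X.exec_reparam _ hnorm sg ⟨hsg_mono, hsg_surj, hsg_cont⟩
    have heq : (normComp (P 0) U') ∘ sg = fun t : I =>
        mooreCompN (n+1) (fun _ => (1:ℝ)) (fun i s => P i (toI s)) ((m+1) * ↑t) := by
      funext t
      have ht0 : (0:ℝ) ≤ t := t.2.1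
      have ht1 : (t:ℝ) ≤ 1 := t.2.2
      have hrt : r t = if (m+1)*(t:ℝ) ≤ 1 then (m+1)*t/2 else 1/2 + ((m+1)*(t:ℝ) - 1)/(2*m) := by
        rw [hrdef]
      by_cases h : (m+1)*(t:ℝ) ≤ 1
      · have hcoe : ((sg t : I) : ℝ) = (m+1)*(t:ℝ)/2 := by
          show ((toI (r t)):ℝ) = _
          rw [hrt, if_pos h]
          exact toI_coe_of_mem (by positivity) (by linarith)
        have hhalf : ((sg t : I):ℝ) ≤ 1/2 := by
          rw [hcoe]; linarith
        show normComp (P 0) U' (sg t) = _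
        rw [normComp]
        simp only [if_pos hhalf]
        rw [mooreCompN_head _ _ _ _ h]
        rw [hcoe]
        congr 1
        ring
      · push_neg at h
        have hnum : (0:ℝ) < (m+1)*(t:ℝ) - 1 := by linarith
        have hub : (m+1)*(t:ℝ) - 1 ≤ m := by nlinarith
        have hcoe : ((sg t : I) : ℝ) = 1/2 + ((m+1)*(t:ℝ) - 1)/(2*m) := by
          show ((toI (r t)):ℝ) = _
          rw [hrt, if_neg (by push_neg; exact h)]
          apply toI_coe_of_mem
          · have : (0:ℝ) ≤ ((m+1)*(t:ℝ) - 1)/(2*m) := by positivity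
            linarith
          · have : ((m+1)*(t:ℝ) - 1)/(2*m) ≤ 1/2 := by
              rw [div_le_iff₀ (by linarith)]
              linarith
            linarith
        have hhalf : ¬ (((sg t : I):ℝ) ≤ 1/2) := by
          rw [hcoe]
          push_neg
          have : (0:ℝ) < ((m+1)*(t:ℝ) - 1)/(2*m) := by positivity
          linarith
        show normComp (P 0) U' (sg t) = _
        rw [normComp]
        simp only [if_neg hhalf]
        have harg : 2 * ((sg t : I):ℝ) - 1 = ((m+1)*(t:ℝ) - 1)/m := by
          rw [hcoe]
          field_simp
          ring
        rw [harg]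
        have hcoe2 : ((toI (((m+1)*(t:ℝ) - 1)/m) : I) : ℝ) = ((m+1)*(t:ℝ) - 1)/m := by
          apply toI_coe_of_mem
          · positivity
          · rw [div_le_one (by linarith)]; linarith
        show mooreCompN n (fun _ => (1:ℝ)) (fun i s => P i.succ (toI s)) (m * ↑(toI (((m+1)*(t:ℝ) - 1)/m))) = _
        rw [hcoe2]
        have hmv : m * (((m+1)*(t:ℝ) - 1)/m) = (m+1)*(t:ℝ) - 1 := by
          field_simp
        rw [hmv]
        show _ = mooreComp 1 _ _ ((m+1) * ↑t)
        rw [mooreComp]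
        simp only [if_neg (by push_neg; exact h : ¬ ((m+1)*(t:ℝ) ≤ 1))]
    rw [heq] at hfinal
    push_cast
    rw [← hm]
    exact hfinal

/- ## One-sided limit uniqueness -/

lemma eq_right_lim {f g : ℝ → α} {x₀ : ℝ} (hT2 : T2Space α)
    (hf : Continuous f) (hg : Continuous g)
    (h : ∀ᶠ x in nhdsWithin x₀ (Set.Ioi x₀), f x = g x) : f x₀ = g x₀ := by
  haveI := hT2
  have h1 : Filter.Tendsto f (nhdsWithin x₀ (Set.Ioi x₀)) (nhds (f x₀)) :=
    (hf.tendsto x₀).mono_left nhdsWithin_le_nhds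
  have h2 : Filter.Tendsto g (nhdsWithin x₀ (Set.Ioi x₀)) (nhds (g x₀)) :=
    (hg.tendsto x₀).mono_left nhdsWithin_le_nhds
  have h3 : Filter.Tendsto f (nhdsWithin x₀ (Set.Ioi x₀)) (nhds (g x₀)) :=
    h2.congr' (h.mono fun x hx => hx.symm)
  exact tendsto_nhds_unique h1 h3

/- ## Adjacency of the pieces of a globular decomposition -/

lemma adj_of_decomp (hT2 : T2Space α) (m : ℕ) (P : Fin (m+1) → I → α)
    (hPc : ∀ i, Continuous (P i))
    (ψ : I → ℝ) (hψm : Monotone ψ) (hψc : Continuous ψ)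
    (hψ0 : ψ 0 = 0) (hψ1 : ψ 1 = (m:ℝ)+1)
    (γ : I → α) (hγ : Continuous γ)
    (hdec : ∀ t : I, γ t = mooreCompN m (fun _ => 1) (fun i s => P i (toI s)) (ψ t)) :
    ∀ i : ℕ, (h : i < m) → P ⟨i, by omega⟩ 1 = P ⟨i+1, by omega⟩ 0 := by
  intro i hi
  set ψ' : ℝ → ℝ := fun x => ψ (toI x) with hψ'def
  have hψ'c : Continuous ψ' := hψc.comp toI_cont
  set k : ℝ := (i:ℝ) + 1 with hk
  have hk1 : k ≤ (m:ℝ) := by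
    rw [hk]
    have : (i:ℝ) + 1 ≤ (m:ℝ) := by exact_mod_cast hi
    linarith
  set S : Set ℝ := {x | x ∈ Set.Icc (0:ℝ) 1 ∧ ψ' x ≤ k} with hSdef
  have hS0 : (0:ℝ) ∈ S := by
    constructor
    · exact ⟨le_refl 0, zero_le_one⟩
    · show ψ (toI 0) ≤ k
      rw [toI_zero, hψ0]
      positivity
  have hSne : S.Nonempty := ⟨0, hS0⟩
  have hSbdd : BddAbove S := ⟨1, fun x hx => hx.1.2⟩
  have hSclosed : IsClosed S :=
    ((isClosed_Icc).inter (isClosed_le hψ'c continuous_const))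
  set b : ℝ := sSup S with hbdef
  have hbmem : b ∈ S := hSclosed.csSup_mem hSne hSbdd
  have hb0 : 0 ≤ b := le_csSup hSbdd hS0
  have hb1 : b < 1 := by
    rcases lt_or_eq_of_le (hbmem.1.2 : b ≤ 1) with h | h
    · exact h
    · exfalso
      have : ψ' 1 ≤ k := h ▸ hbmem.2
      rw [hψ'def] at this
      simp only [toI_one, hψ1] at this
      linarith
  have hψb : ψ' b = k := by
    rcases lt_or_eq_of_le hbmem.2 with hlt | heq
    · exfalso
      have hopen : IsOpen {x : ℝ | ψ' x < k} := isOpen_lt hψ'c continuous_const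
      obtain ⟨ε, hε, hball⟩ := Metric.mem_nhds_iff.mp (hopen.mem_nhds hlt)
      set x := min (b + ε/2) ((b+1)/2) with hxdef
      have hxb : b < x := by
        apply lt_min <;> linarith
      have hx1 : x < 1 := by
        apply lt_of_le_of_lt (min_le_right _ _)
        linarith
      have hxS : x ∈ S := by
        refine ⟨⟨by linarith, le_of_lt hx1⟩, le_of_lt (hball ?_)⟩
        rw [Metric.mem_ball, Real.dist_eq, abs_of_nonneg (by linarith [min_le_left (b + ε/2) ((b+1)/2)] : (0:ℝ) ≤ x - b)]
        linarith [min_le_left (b + ε/2) ((b+1)/2)]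
      exact absurd (le_csSup hSbdd hxS) (not_le.mpr hxb)
    · exact heq
  -- value at b
  have hvb : γ (toI b) = P ⟨i, by omega⟩ 1 := by
    rw [hdec (toI b)]
    have : ψ (toI b) = k := hψb
    rw [this]
    rw [mooreCompN_eval m _ i (by omega) k (by rw [hk]; linarith) (by rw [hk])]
    congr 1
    rw [hk]
    have : (i:ℝ) + 1 - (i:ℝ) = 1 := by ring
    rw [this, toI_one]
  -- right limit at b
  have hev : ∀ᶠ x in nhdsWithin b (Set.Ioi b),
      γ (toI x) = P ⟨i+1, by omega⟩ (toI (ψ' x - k)) := by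
    have hopen : IsOpen {x : ℝ | x < 1 ∧ ψ' x < k + 1} :=
      (isOpen_lt continuous_id continuous_const).inter (isOpen_lt hψ'c continuous_const)
    have hbU : b ∈ {x : ℝ | x < 1 ∧ ψ' x < k + 1} := ⟨hb1, by rw [hψb]; linarith⟩
    filter_upwards [mem_nhdsWithin_of_mem_nhds (hopen.mem_nhds hbU), self_mem_nhdsWithin]
      with x hxU hxb
    have hxgt : k < ψ' x := by
      by_contra hle
      push_neg at hle
      have hxS : x ∈ S := ⟨⟨by linarith [Set.mem_Ioi.mp hxb], le_of_lt hxU.1⟩, hle⟩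
      exact absurd (le_csSup hSbdd hxS) (not_le.mpr (Set.mem_Ioi.mp hxb))
    rw [hdec (toI x)]
    have : ψ (toI x) = ψ' x := rfl
    rw [this]
    rw [mooreCompN_eval m _ (i+1) (by omega) (ψ' x) (by push_cast; rw [hk] at hxgt; linarith)
      (by push_cast; rw [hk] at hxU; linarith [hxU.2])]
    congr 2
    push_cast
    rw [hk]
  have hlim := eq_right_lim hT2 (hγ.comp toI_cont)
    ((hPc ⟨i+1, by omega⟩).comp (toI_cont.comp (hψ'c.sub continuous_const))) hev
  simp only [Function.comp] at hlim
  rw [hvb] at hlim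
  rw [hlim]
  simp only [Pi.sub_apply]
  rw [hψb, hk]
  simp [toI_zero]

/- ## Uniqueness of cell decompositions of points -/

lemma cell_glue (X : CellularMDSpace α) {i j : X.ι}
    (zi : EuclideanSpace ℝ (Fin (X.cell i).n)) (zj : EuclideanSpace ℝ (Fin (X.cell j).n))
    (ti tj : I) (hzi : ‖zi‖ < 1) (hzj : ‖zj‖ < 1)
    (hti0 : 0 < (ti:ℝ)) (hti1 : (ti:ℝ) < 1) (htj0 : 0 < (tj:ℝ)) (htj1 : (tj:ℝ) < 1)
    (heq : (X.cell i).g zi ti = (X.cell j).g zj tj) :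
    (∀ t, (X.cell i).g zi t = (X.cell j).g zj t) ∧ ti = tj := by
  have hij : i = j := by
    by_contra hne
    have hd := X.cell_disjoint hne
    have h1 : (X.cell i).g zi ti ∈ (X.cell i).openCell := ⟨zi, ti, hzi, hti0, hti1, rfl⟩
    have h2 : (X.cell i).g zi ti ∈ (X.cell j).openCell := ⟨zj, tj, hzj, htj0, htj1, heq.symm⟩
    exact Set.disjoint_left.mp hd h1 h2
  subst hij
  obtain ⟨hz, ht⟩ := (X.cell i).g_inj zi zj ti tj hzi hzj hti0 hti1 htj0 htj1 heq
  subst hz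
  exact ⟨fun t => rfl, ht⟩

/- ## The splice lemma -/

lemma splice (X : CellularMDSpace α) (γ δ : I → α) (hγ : γ ∈ X.exec) (hδ : δ ∈ X.exec)
    (φ χ : I → I) (hφ : IsNondecreasing φ) (hχ : IsNondecreasing χ)
    (hjun : γ (φ 1) = δ (χ 0)) :
    ∃ (ε : I → α) (θ : I → I), ε ∈ X.exec ∧ IsNondecreasing θ ∧
      normComp (γ ∘ φ) (δ ∘ χ) = ε ∘ θ := by
  obtain ⟨m, c, z, ψ, hz, hψm, hψc, hψ0, hψ1, hdec⟩ := X.exec_decomp γ hγ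
  obtain ⟨m', c', z', ψ', hz', hψm', hψc', hψ0', hψ1', hdec'⟩ := X.exec_decomp δ hδ
  -- ℕ-indexed cell paths
  set Pγ : ℕ → I → α := fun j t =>
    (X.cell (c ⟨min j m, Nat.lt_succ_of_le (min_le_right j m)⟩)).g
      (z ⟨min j m, Nat.lt_succ_of_le (min_le_right j m)⟩) t with hPγdef
  set Pδ : ℕ → I → α := fun j t =>
    (X.cell (c' ⟨min j m', Nat.lt_succ_of_le (min_le_right j m')⟩)).g
      (z' ⟨min j m', Nat.lt_succ_of_le (min_le_right j m')⟩) t with hPδdef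
  have hPγ : ∀ (j : ℕ) (hj : j ≤ m), Pγ j = fun t =>
      (X.cell (c ⟨j, Nat.lt_succ_of_le hj⟩)).g (z ⟨j, Nat.lt_succ_of_le hj⟩) t := by
    intro j hj
    have e : (⟨min j m, Nat.lt_succ_of_le (min_le_right j m)⟩ : Fin (m+1))
        = ⟨j, Nat.lt_succ_of_le hj⟩ := by simp [min_eq_left hj]
    funext t
    show (X.cell (c ⟨min j m, Nat.lt_succ_of_le (min_le_right j m)⟩)).g
      (z ⟨min j m, Nat.lt_succ_of_le (min_le_right j m)⟩) t = _
    rw [e]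
  have hPδ : ∀ (j : ℕ) (hj : j ≤ m'), Pδ j = fun t =>
      (X.cell (c' ⟨j, Nat.lt_succ_of_le hj⟩)).g (z' ⟨j, Nat.lt_succ_of_le hj⟩) t := by
    intro j hj
    have e : (⟨min j m', Nat.lt_succ_of_le (min_le_right j m')⟩ : Fin (m'+1))
        = ⟨j, Nat.lt_succ_of_le hj⟩ := by simp [min_eq_left hj]
    funext t
    show (X.cell (c' ⟨min j m', Nat.lt_succ_of_le (min_le_right j m')⟩)).g
      (z' ⟨min j m', Nat.lt_succ_of_le (min_le_right j m')⟩) t = _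
    rw [e]
  have hPγexec : ∀ j, Pγ j ∈ X.exec := fun j =>
    (X.cell _).exec_mem _ (le_of_lt (hz _))
  have hPδexec : ∀ j, Pδ j ∈ X.exec := fun j =>
    (X.cell _).exec_mem _ (le_of_lt (hz' _))
  have hPγc : ∀ j, Continuous (Pγ j) := fun j => X.exec_cont _ (hPγexec j)
  have hPδc : ∀ j, Continuous (Pδ j) := fun j => X.exec_cont _ (hPδexec j)
  -- adjacency of the cell paths
  have hadjγ : ∀ i : ℕ, i < m → Pγ i 1 = Pγ (i+1) 0 := by
    intro i hi
    have := adj_of_decomp X.t2 m (fun i t => (X.cell (c i)).g (z i) t)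
      (fun i => X.exec_cont _ ((X.cell _).exec_mem _ (le_of_lt (hz i))))
      ψ hψm hψc hψ0 hψ1 γ (X.exec_cont _ hγ) hdec i hi
    rw [hPγ i (by omega), hPγ (i+1) (by omega)]
    exact this
  have hadjδ : ∀ i : ℕ, i < m' → Pδ i 1 = Pδ (i+1) 0 := by
    intro i hi
    have := adj_of_decomp X.t2 m' (fun i t => (X.cell (c' i)).g (z' i) t)
      (fun i => X.exec_cont _ ((X.cell _).exec_mem _ (le_of_lt (hz' i))))
      ψ' hψm' hψc' hψ0' hψ1' δ (X.exec_cont _ hδ) hdec' i hi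
    rw [hPδ i (by omega), hPδ (i+1) (by omega)]
    exact this
  -- the Moore compositions
  set Mγ : ℝ → α :=
    mooreCompN m (fun _ => 1) (fun i s => (X.cell (c i)).g (z i) (toI s)) with hMγdef
  set Mδ : ℝ → α :=
    mooreCompN m' (fun _ => 1) (fun i s => (X.cell (c' i)).g (z' i) (toI s)) with hMδdef
  have evalγ : ∀ (j : ℕ) (hj : j ≤ m) (s : ℝ), (j:ℝ) < s → s ≤ (j:ℝ)+1 →
      Mγ s = Pγ j (toI (s - j)) := by
    intro j hj s h1 h2
    rw [hMγdef, mooreCompN_eval m _ j hj s h1 h2, hPγ j hj]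
  have evalδ : ∀ (j : ℕ) (hj : j ≤ m') (s : ℝ), (j:ℝ) < s → s ≤ (j:ℝ)+1 →
      Mδ s = Pδ j (toI (s - j)) := by
    intro j hj s h1 h2
    rw [hMδdef, mooreCompN_eval m' _ j hj s h1 h2, hPδ j hj]
  have headγ : Mγ 0 = Pγ 0 (toI 0) := by
    rw [hMγdef, mooreCompN_head m _ _ 0 (by norm_num), hPγ 0 (by omega)]
    simp only [Fin.mk_zero]
  have headδ : Mδ 0 = Pδ 0 (toI 0) := by
    rw [hMδdef, mooreCompN_head m' _ _ 0 (by norm_num), hPδ 0 (by omega)]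
    simp only [Fin.mk_zero]
  -- endpoints of reparametrizations
  set b : ℝ := ψ (φ 1) with hbdef
  set a : ℝ := ψ' (χ 0) with hadef
  have hψrange : ∀ t : I, 0 ≤ ψ t ∧ ψ t ≤ (m:ℝ)+1 := by
    intro t
    constructor
    · rw [← hψ0]; exact hψm t.2.1
    · rw [← hψ1]; exact hψm t.2.2
  have hψrange' : ∀ t : I, 0 ≤ ψ' t ∧ ψ' t ≤ (m':ℝ)+1 := by
    intro t
    constructor
    · rw [← hψ0']; exact hψm' t.2.1
    · rw [← hψ1']; exact hψm' t.2.2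
  have hb0 : 0 ≤ b := (hψrange _).1
  have hbm : b ≤ (m:ℝ)+1 := (hψrange _).2
  have ha0 : 0 ≤ a := (hψrange' _).1
  have ham : a ≤ (m':ℝ)+1 := (hψrange' _).2
  have hγM : ∀ t : I, γ t = Mγ (ψ t) := hdec
  have hδM : ∀ t : I, δ t = Mδ (ψ' t) := hdec'
  have hx : Mγ b = Mδ a := by rw [← hγM (φ 1), ← hδM (χ 0)]; exact hjun
  have hIle : ∀ s t : I, s ≤ t → (s:ℝ) ≤ (t:ℝ) := fun s t h => h
  by_cases hbz : b ≤ 0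
  · -- the head is constant: reuse δ
    have hbeq : b = 0 := le_antisymm hbz hb0
    refine ⟨δ, fun t => if (t:ℝ) ≤ 1/2 then χ 0 else χ (toI (2*(t:ℝ) - 1)), hδ, ⟨?_, ?_⟩, ?_⟩
    · intro s t hst
      have hst' : (s:ℝ) ≤ (t:ℝ) := hst
      by_cases hs : (s:ℝ) ≤ 1/2 <;> by_cases ht : (t:ℝ) ≤ 1/2
      · simp only [if_pos hs, if_pos ht]; exact le_refl _
      · simp only [if_pos hs, if_neg ht]
        exact hχ.1 (unitInterval.nonneg' : (0:I) ≤ _)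
      · exact absurd (by linarith : (s:ℝ) ≤ 1/2) hs
      · simp only [if_neg hs, if_neg ht]
        exact hχ.1 (toI_mono (by linarith))
    · apply Continuous.if_le continuous_const
        (hχ.2.comp (toI_cont.comp (by fun_prop))) continuous_subtype_val continuous_const
      intro x hx'
      simp only [Function.comp_apply]
      rw [hx']
      norm_num [toI_zero]
    · funext t
      show normComp (γ ∘ φ) (δ ∘ χ) t = δ _
      rw [normComp]
      by_cases ht : (t:ℝ) ≤ 1/2
      · simp only [if_pos ht, Function.comp]
        have h1 : ψ (φ (toI (2*(t:ℝ)))) = b := by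
          apply le_antisymm
          · exact hψm (hφ.1 (unitInterval.le_one' : _ ≤ (1:I)))
          · rw [hbeq]; exact (hψrange _).1
        calc γ (φ (toI (2*(t:ℝ)))) = Mγ (ψ (φ (toI (2*(t:ℝ))))) := hγM _
          _ = Mγ b := by rw [h1]
          _ = Mδ a := hx
          _ = δ (χ 0) := (hδM (χ 0)).symm
      · simp only [if_neg ht, Function.comp]
  · by_cases ha1 : (m':ℝ) + 1 ≤ a
    · -- the tail is constant: reuse γ
      have haeq : a = (m':ℝ) + 1 := le_antisymm ham ha1
      refine ⟨γ, fun t => if (t:ℝ) ≤ 1/2 then φ (toI (2*(t:ℝ))) else φ 1, hγ, ⟨?_, ?_⟩, ?_⟩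
      · intro s t hst
        have hst' : (s:ℝ) ≤ (t:ℝ) := hst
        by_cases hs : (s:ℝ) ≤ 1/2 <;> by_cases ht : (t:ℝ) ≤ 1/2
        · simp only [if_pos hs, if_pos ht]
          exact hφ.1 (toI_mono (by linarith))
        · simp only [if_pos hs, if_neg ht]
          exact hφ.1 (unitInterval.le_one' : _ ≤ (1:I))
        · exact absurd (by linarith : (s:ℝ) ≤ 1/2) hs
        · simp only [if_neg hs, if_neg ht]; exact le_refl _
      · apply Continuous.if_le (hφ.2.comp (toI_cont.comp (by fun_prop))) continuous_const
          continuous_subtype_val continuous_const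
        intro x hx'
        simp only [Function.comp_apply]
        rw [hx']
        norm_num [toI_one]
      · funext t
        show normComp (γ ∘ φ) (δ ∘ χ) t = γ _
        rw [normComp]
        by_cases ht : (t:ℝ) ≤ 1/2
        · simp only [if_pos ht, Function.comp]
        · simp only [if_neg ht, Function.comp]
          have h1 : ψ' (χ (toI (2*(t:ℝ) - 1))) = a := by
            apply le_antisymm
            · rw [haeq]; exact (hψrange' _).2
            · exact hψm' (hχ.1 (unitInterval.nonneg' : (0:I) ≤ _))
          calc δ (χ (toI (2*(t:ℝ) - 1))) = Mδ (ψ' (χ (toI (2*(t:ℝ) - 1)))) := hδM _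
            _ = Mδ a := by rw [h1]
            _ = Mγ b := hx.symm
            _ = γ (φ 1) := (hγM (φ 1)).symm
    · -- main case
      push_neg at hbz ha1
      -- analysis of the junction point
      obtain ⟨p, q, fb, hfb0, hfb1, hbpf, hapf, hq, hpcase, hcompat, hseam⟩ :
          ∃ (p q : ℕ) (fb : ℝ), 0 ≤ fb ∧ fb < 1 ∧ b = p + fb ∧ a = q + fb ∧ q ≤ m' ∧
            ((fb = 0 ∧ 1 ≤ p ∧ p ≤ m+1) ∨ (0 < fb ∧ p ≤ m)) ∧
            (0 < fb → ∀ t, Pγ p t = Pδ q t) ∧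
            (fb = 0 → Pγ (p-1) 1 = Pδ q 0) := by
        -- data on the γ side
        set pb : ℕ := Nat.ceil b with hpbdef
        have hpb1 : 1 ≤ pb := Nat.ceil_pos.mpr hbz
        have hble : b ≤ (pb:ℝ) := Nat.le_ceil b
        have hjblt : ((pb:ℝ)) - 1 < b := by
          have := Nat.ceil_lt_add_one hb0
          linarith
        have hpbm : pb ≤ m + 1 := by
          apply Nat.ceil_le.mpr
          push_cast
          linarith
        set jb : ℕ := pb - 1 with hjbdef
        have hjbcast : (jb:ℝ) = (pb:ℝ) - 1 := by
          rw [hjbdef]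
          push_cast [Nat.cast_sub hpb1]
          ring
        have hjbm : jb ≤ m := by omega
        have hjblt' : (jb:ℝ) < b := by rw [hjbcast]; linarith
        have hjble : b ≤ (jb:ℝ) + 1 := by rw [hjbcast]; linarith
        have hMb : Mγ b = Pγ jb (toI (b - jb)) := evalγ jb hjbm b hjblt' hjble
        set fγ : ℝ := b - jb with hfγdef
        have hfγ0 : 0 < fγ := by rw [hfγdef]; linarith
        have hfγ1 : fγ ≤ 1 := by rw [hfγdef]; linarith
        -- data on the δ side
        set ja : ℕ := Nat.floor a with hjadef
        have hjale : (ja:ℝ) ≤ a := Nat.floor_le ha0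
        have hjalt : a < (ja:ℝ) + 1 := Nat.lt_floor_add_one a
        have hjam : ja ≤ m' := by
          have : ja < m' + 1 := (Nat.floor_lt ha0).mpr (by push_cast; linarith)
          omega
        set fa : ℝ := a - ja with hfadef
        have hfa0 : 0 ≤ fa := by rw [hfadef]; linarith
        have hfa1 : fa < 1 := by rw [hfadef]; linarith
        have hMa : Mδ a = Pδ ja (toI fa) := by
          rcases eq_or_lt_of_le hjale with heqa | hlta
          · have hfaz : fa = 0 := by rw [hfadef]; linarith
            rcases Nat.eq_zero_or_pos ja with hjaz | hjap
            · have ha' : a = 0 := by rw [← heqa, hjaz]; norm_num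
              rw [ha', hfaz, hjaz]
              exact headδ
            · have hjacast : ((ja - 1 : ℕ) : ℝ) = (ja:ℝ) - 1 := by
                push_cast [Nat.cast_sub hjap]
                ring
              have h1 : Mδ a = Pδ (ja - 1) (toI (a - (ja - 1 : ℕ))) :=
                evalδ (ja - 1) (by omega) a (by rw [hjacast]; linarith)
                  (by rw [hjacast]; linarith)
              have h2 : a - ((ja - 1 : ℕ) : ℝ) = 1 := by rw [hjacast]; linarith
              rw [h1, h2, toI_one]
              have h3 := hadjδ (ja - 1) (by omega)
              have h4 : ja - 1 + 1 = ja := by omega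
              rw [h4] at h3
              rw [h3, hfaz, toI_zero]
          · exact evalδ ja hjam a hlta (by linarith)
        -- interior/state analysis
        have hMbI : Mγ b = (X.cell (c ⟨jb, Nat.lt_succ_of_le hjbm⟩)).g
            (z ⟨jb, Nat.lt_succ_of_le hjbm⟩) (toI fγ) := by
          rw [hMb, hPγ jb hjbm]
        have hMaI : Mδ a = (X.cell (c' ⟨ja, Nat.lt_succ_of_le hjam⟩)).g
            (z' ⟨ja, Nat.lt_succ_of_le hjam⟩) (toI fa) := by
          rw [hMa, hPδ ja hjam]
        have hfγcoe : ((toI fγ : I) : ℝ) = fγ := toI_coe_of_mem (le_of_lt hfγ0) hfγ1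
        have hfacoe : ((toI fa : I) : ℝ) = fa := toI_coe_of_mem hfa0 (le_of_lt hfa1)
        rcases lt_or_eq_of_le hfγ1 with hfγlt | hfγeq
        · -- γ side interior
          have hopenγ : Mγ b ∈ (X.cell (c ⟨jb, Nat.lt_succ_of_le hjbm⟩)).openCell :=
            ⟨z _, toI fγ, hz _, by rw [hfγcoe]; exact hfγ0, by rw [hfγcoe]; exact hfγlt,
              hMbI.symm⟩
          rcases eq_or_lt_of_le hfa0 with hfaz | hfap
          · -- δ side state: contradiction
            exfalso
            have hstate : Mδ a ∈ X.states := by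
              rw [hMaI, ← hfaz, toI_zero]
              rw [(X.cell _).g_src _ (le_of_lt (hz' _))]
              exact (X.cell _).src_mem
            rw [← hx] at hstate
            exact Set.disjoint_left.mp (X.cell_states_disjoint _) hopenγ hstate
          · -- both interior: glue
            have hgg : (X.cell (c ⟨jb, Nat.lt_succ_of_le hjbm⟩)).g
                (z ⟨jb, Nat.lt_succ_of_le hjbm⟩) (toI fγ)
                = (X.cell (c' ⟨ja, Nat.lt_succ_of_le hjam⟩)).g
                  (z' ⟨ja, Nat.lt_succ_of_le hjam⟩) (toI fa) :=
              hMbI.symm.trans (hx.trans hMaI)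
            have hglue := cell_glue X _ _ (toI fγ) (toI fa) (hz _) (hz' _)
              (by rw [hfγcoe]; exact hfγ0) (by rw [hfγcoe]; exact hfγlt)
              (by rw [hfacoe]; exact hfap) (by rw [hfacoe]; exact hfa1) hgg
            have hfeq : fγ = fa := by
              have h1 := congrArg (fun x : I => (x:ℝ)) hglue.2
              simpa [hfγcoe, hfacoe] using h1
            refine ⟨jb, ja, fγ, le_of_lt hfγ0, hfγlt, by rw [hfγdef]; ring,
              by rw [hfeq, hfadef]; ring, hjam, Or.inr ⟨hfγ0, hjbm⟩, ?_, ?_⟩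
            · intro _ t
              rw [hPγ jb hjbm, hPδ ja hjam]
              exact hglue.1 t
            · intro h
              exact absurd h (by linarith)
        · -- γ side state
          have hstateγ : Mγ b ∈ X.states := by
            rw [hMbI, hfγeq, toI_one]
            rw [(X.cell _).g_tgt _ (le_of_lt (hz _))]
            exact (X.cell _).tgt_mem
          rcases eq_or_lt_of_le hfa0 with hfaz | hfap
          · -- both states
            refine ⟨pb, ja, 0, le_refl 0, zero_lt_one, ?_, ?_, hjam,
              Or.inl ⟨rfl, hpb1, hpbm⟩, ?_, ?_⟩
            · rw [hfγdef] at hfγeq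
              rw [hjbcast] at hfγeq
              linarith
            · rw [hfadef] at hfaz
              linarith
            · intro h
              exact absurd h (by linarith)
            · intro _
              have hpbjb : pb - 1 = jb := rfl
              rw [hpbjb]
              have h1 : Pγ jb 1 = Mγ b := by rw [hMb, hfγeq, toI_one]
              rw [h1, hx, hMa, ← hfaz, toI_zero]
          · -- δ side interior: contradiction
            exfalso
            have hopenδ : Mδ a ∈ (X.cell (c' ⟨ja, Nat.lt_succ_of_le hjam⟩)).openCell :=
              ⟨z' _, toI fa, hz' _, by rw [hfacoe]; exact hfap, by rw [hfacoe]; exact hfa1,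
                hMaI.symm⟩
            rw [← hx] at hopenδ
            exact Set.disjoint_left.mp (X.cell_states_disjoint _) hopenδ hstateγ
      -- the glued cell sequence
      have hqcast : (q:ℝ) ≤ (m':ℝ) := by exact_mod_cast hq
      set N : ℕ := p + (m' - q) with hNdef
      have hNcast : (N:ℝ) = p + m' - q := by
        rw [hNdef]
        push_cast [Nat.cast_sub hq]
        ring
      have hNpos : (0:ℝ) < (N:ℝ) + 1 := by positivity
      set Q : ℕ → I → α := fun j => if j < p then Pγ j else Pδ (j - p + q) with hQdef
      have hQγ : ∀ j, j < p → Q j = Pγ j := by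
        intro j hj
        rw [hQdef]
        simp only [if_pos hj]
      have hQδ : ∀ j, p ≤ j → Q j = Pδ (j - p + q) := by
        intro j hj
        rw [hQdef]
        simp only [if_neg (by omega : ¬ j < p)]
      have hQexec : ∀ j, Q j ∈ X.exec := by
        intro j
        by_cases hj : j < p
        · rw [hQγ j hj]; exact hPγexec j
        · rw [hQδ j (by omega)]; exact hPδexec _
      have hQadj : ∀ i : ℕ, i < N → Q i 1 = Q (i+1) 0 := by
        intro i hi
        rcases lt_trichotomy (i+1) p with h1 | h1 | h1
        · rw [hQγ i (by omega), hQγ (i+1) h1]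
          apply hadjγ
          rcases hpcase with ⟨_, _, hpm1⟩ | ⟨_, hpm1⟩ <;> omega
        · rw [hQγ i (by omega), hQδ (i+1) (by omega),
            show i + 1 - p + q = q from by omega]
          rcases hpcase with ⟨hfbz, hp1, hpm1⟩ | ⟨hfbp, hpm1⟩
          · have h2 := hseam hfbz
            rw [show p - 1 = i from by omega] at h2
            exact h2
          · have h2 := hadjγ i (by omega)
            rw [h1] at h2
            rw [h2]
            exact hcompat hfbp 0
        · rw [hQδ i (by omega), hQδ (i+1) (by omega),
            show i + 1 - p + q = (i - p + q) + 1 from by omega]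
          exact hadjδ (i - p + q) (by omega)
      set MQ : ℝ → α := mooreCompN N (fun _ => 1) (fun i s => Q i (toI s)) with hMQdef
      have evalQ : ∀ (j : ℕ), j ≤ N → ∀ (s : ℝ), (j:ℝ) < s → s ≤ (j:ℝ)+1 →
          MQ s = Q j (toI (s - j)) := by
        intro j hj s h1 h2
        rw [hMQdef, mooreCompN_eval N _ j hj s h1 h2]
      have headQ : MQ 0 = Q 0 (toI 0) := by
        rw [hMQdef, mooreCompN_head N _ _ 0 (by norm_num)]
        simp
      -- MQ agrees with Mγ on [0, b]
      have hγeval : ∀ s : ℝ, 0 ≤ s → s ≤ b → MQ s = Mγ s := by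
        intro s hs0 hsb
        rcases eq_or_lt_of_le hs0 with hs | hs
        · rw [← hs, headγ, headQ]
          by_cases hp0 : 0 < p
          · rw [hQγ 0 hp0]
          · have hfbp : 0 < fb := by
              rcases hpcase with ⟨_, h1, _⟩ | ⟨h1, _⟩
              · omega
              · exact h1
            have hp0' : p = 0 := by omega
            rw [hQδ 0 (by omega), show 0 - p + q = q from by omega]
            have := hcompat hfbp (toI 0)
            rw [hp0'] at this
            exact this.symm
        · set pc : ℕ := Nat.ceil s with hpcdef
          have hpc1 : 1 ≤ pc := Nat.ceil_pos.mpr hs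
          have hsle : s ≤ (pc:ℝ) := Nat.le_ceil s
          have hpclt : (pc:ℝ) - 1 < s := by
            have := Nat.ceil_lt_add_one (le_of_lt hs)
            linarith
          set j : ℕ := pc - 1 with hjdef
          have hjcast : (j:ℝ) = (pc:ℝ) - 1 := by
            rw [hjdef]
            push_cast [Nat.cast_sub hpc1]
            ring
          have hjlt : (j:ℝ) < s := by rw [hjcast]; linarith
          have hjle : s ≤ (j:ℝ) + 1 := by rw [hjcast]; linarith
          rcases hpcase with ⟨hfbz, hp1, hpm1⟩ | ⟨hfbp, hpm1⟩
          · have hpcp : pc ≤ p := by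
              apply Nat.ceil_le.mpr
              rw [hbpf, hfbz] at hsb
              push_cast
              linarith
            have hjp : j < p := by omega
            rw [evalQ j (by omega) s hjlt hjle, evalγ j (by omega) s hjlt hjle, hQγ j hjp]
          · have hpcp : pc ≤ p + 1 := by
              apply Nat.ceil_le.mpr
              rw [hbpf] at hsb
              push_cast
              linarith
            have hjp : j ≤ p := by omega
            rw [evalQ j (by omega) s hjlt hjle, evalγ j (by omega) s hjlt hjle]
            rcases lt_or_eq_of_le hjp with h | h
            · rw [hQγ j h]
            · rw [h, hQδ p (le_refl p), show p - p + q = q from by omega]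
              exact (hcompat hfbp _).symm
      -- MQ, shifted, agrees with Mδ on [a, m'+1]
      have hδeval : ∀ s : ℝ, a ≤ s → s ≤ (m':ℝ)+1 → MQ (s - a + b) = Mδ s := by
        intro s hsa hsm
        rcases eq_or_lt_of_le hsa with hs | hs
        · rw [← hs, show a - a + b = b from by ring, ← hx]
          exact hγeval b hb0 (le_refl b)
        · have hs0 : (0:ℝ) < s := lt_of_le_of_lt ha0 hs
          set pc : ℕ := Nat.ceil s with hpcdef
          have hpc1 : 1 ≤ pc := Nat.ceil_pos.mpr hs0
          have hsle : s ≤ (pc:ℝ) := Nat.le_ceil s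
          have hpclt : (pc:ℝ) - 1 < s := by
            have := Nat.ceil_lt_add_one (le_of_lt hs0)
            linarith
          set j : ℕ := pc - 1 with hjdef
          have hjcast : (j:ℝ) = (pc:ℝ) - 1 := by
            rw [hjdef]
            push_cast [Nat.cast_sub hpc1]
            ring
          have hjlt : (j:ℝ) < s := by rw [hjcast]; linarith
          have hjle : s ≤ (j:ℝ) + 1 := by rw [hjcast]; linarith
          have hqj : q ≤ j := by
            have hqpc : q < pc := Nat.lt_ceil.mpr (by rw [hapf] at hs; linarith)
            omega
          have hjm' : j ≤ m' := by
            have : pc ≤ m' + 1 := Nat.ceil_le.mpr (by push_cast; linarith)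
            omega
          set jg : ℕ := j - q + p with hjgdef
          have hjgN : jg ≤ N := by omega
          have hjgcast : (jg:ℝ) = (j:ℝ) - q + p := by
            rw [hjgdef]
            push_cast [Nat.cast_sub hqj]
            ring
          have harg : s - a + b - (jg:ℝ) = s - j := by
            rw [hjgcast, hapf, hbpf]
            ring
          have hb1' : (jg:ℝ) < s - a + b := by
            rw [hjgcast, hapf, hbpf]
            linarith
          have hb2' : s - a + b ≤ (jg:ℝ) + 1 := by
            rw [hjgcast, hapf, hbpf]
            linarith
          rw [evalQ jg hjgN (s - a + b) hb1' hb2', evalδ j hjm' s hjlt hjle, harg,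
            hQδ jg (by omega), show jg - p + q = j from by omega]
      -- the spliced execution path
      set ε : I → α := fun t => MQ (((N:ℝ)+1) * t) with hεdef
      have hεexec : ε ∈ X.exec := by
        rw [hεdef, hMQdef]
        apply uniformExec X.toMultipointedDSpace N (fun i => Q i)
        · intro i
          exact hQexec i
        · intro i h
          exact hQadj i h
      -- the reparametrization
      set Φ : I → ℝ := fun t => if (t:ℝ) ≤ 1/2 then ψ (φ (toI (2*(t:ℝ))))
        else ψ' (χ (toI (2*(t:ℝ) - 1))) - a + b with hΦdef
      have hΦ1 : ∀ t : I, (t:ℝ) ≤ 1/2 → Φ t = ψ (φ (toI (2*(t:ℝ)))) := by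
        intro t ht
        simp only [hΦdef, if_pos ht]
      have hΦ2 : ∀ t : I, ¬((t:ℝ) ≤ 1/2) → Φ t = ψ' (χ (toI (2*(t:ℝ) - 1))) - a + b := by
        intro t ht
        simp only [hΦdef, if_neg ht]
      have hbr1 : ∀ u : I, 0 ≤ ψ (φ u) ∧ ψ (φ u) ≤ b :=
        fun u => ⟨(hψrange _).1, hψm (hφ.1 (unitInterval.le_one' : u ≤ 1))⟩
      have hbr2 : ∀ u : I, a ≤ ψ' (χ u) ∧ ψ' (χ u) ≤ (m':ℝ)+1 :=
        fun u => ⟨hψm' (hχ.1 (unitInterval.nonneg' : (0:I) ≤ u)), (hψrange' _).2⟩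
      have hbN : b ≤ (N:ℝ)+1 := by
        rw [hNcast, hbpf]
        linarith
      have hΦlow : ∀ t : I, 0 ≤ Φ t := by
        intro t
        by_cases ht : (t:ℝ) ≤ 1/2
        · rw [hΦ1 t ht]; exact (hbr1 _).1
        · rw [hΦ2 t ht]
          have := (hbr2 (toI (2*(t:ℝ) - 1))).1
          linarith
      have hΦhigh : ∀ t : I, Φ t ≤ (N:ℝ)+1 := by
        intro t
        by_cases ht : (t:ℝ) ≤ 1/2
        · rw [hΦ1 t ht]
          exact le_trans (hbr1 _).2 hbN
        · rw [hΦ2 t ht]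
          have := (hbr2 (toI (2*(t:ℝ) - 1))).2
          rw [hNcast, hapf]
          linarith
      have hΦmono : ∀ s t : I, s ≤ t → Φ s ≤ Φ t := by
        intro s t hst
        have hst' : (s:ℝ) ≤ (t:ℝ) := hst
        by_cases hs : (s:ℝ) ≤ 1/2 <;> by_cases ht : (t:ℝ) ≤ 1/2
        · rw [hΦ1 s hs, hΦ1 t ht]
          exact hψm (hφ.1 (toI_mono (by linarith)))
        · rw [hΦ1 s hs, hΦ2 t ht]
          have h1 := (hbr1 (toI (2*(s:ℝ)))).2
          have h2 := (hbr2 (toI (2*(t:ℝ) - 1))).1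
          linarith
        · exact absurd (by linarith : (s:ℝ) ≤ 1/2) hs
        · rw [hΦ2 s hs, hΦ2 t ht]
          have := hψm' (hχ.1 (toI_mono (by linarith : 2*(s:ℝ) - 1 ≤ 2*(t:ℝ) - 1)))
          linarith
      have hΦcont : Continuous Φ := by
        rw [hΦdef]
        apply Continuous.if_le
        · exact hψc.comp (hφ.2.comp (toI_cont.comp (by fun_prop)))
        · exact ((hψc'.comp (hχ.2.comp (toI_cont.comp (by fun_prop)))).sub
            continuous_const).add continuous_const
        · exact continuous_subtype_val
        · exact continuous_const
        · intro x hx'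
          beta_reduce
          rw [hx']
          norm_num [toI_one, toI_zero]
          linarith [hadef, hbdef]
      set θ : I → I := fun t => toI (Φ t / ((N:ℝ)+1)) with hθdef
      have hθmono : Monotone θ := by
        intro s t hst
        apply toI_mono
        have := hΦmono s t hst
        gcongr
      have hθcont : Continuous θ := toI_cont.comp (hΦcont.div_const _)
      refine ⟨ε, θ, hεexec, ⟨hθmono, hθcont⟩, ?_⟩
      funext t
      have hR : ε (θ t) = MQ (Φ t) := by
        simp only [hεdef, hθdef]
        rw [toI_coe_of_mem (div_nonneg (hΦlow t) (le_of_lt hNpos))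
          ((div_le_one hNpos).mpr (hΦhigh t))]
        congr 1
        field_simp
      show normComp (γ ∘ φ) (δ ∘ χ) t = ε (θ t)
      rw [hR, normComp]
      by_cases ht : (t:ℝ) ≤ 1/2
      · simp only [if_pos ht, Function.comp]
        rw [hγM (φ (toI (2*(t:ℝ)))), hΦ1 t ht,
          hγeval _ (hbr1 (toI (2*(t:ℝ)))).1 (hbr1 (toI (2*(t:ℝ)))).2]
      · simp only [if_neg ht, Function.comp]
        rw [hδM (χ (toI (2*(t:ℝ) - 1))), hΦ2 t ht,
          hδeval _ (hbr2 (toI (2*(t:ℝ) - 1))).1 (hbr2 (toI (2*(t:ℝ) - 1))).2]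
set_option maxHeartbeats 1000000

/- ## Main decomposition lemma -/

lemma dPath_decomp (X : CellularMDSpace α) :
    ∀ (n : ℕ) (ℓ : Fin (n+1) → ℝ) (γs : Fin (n+1) → I → α) (φs : Fin (n+1) → I → I),
    (∀ i, 0 < ℓ i) → (∀ i, γs i ∈ X.exec) → (∀ i, IsNondecreasing (φs i)) →
    ∀ (Γ : I → α), Continuous Γ →
    (∀ t : I, Γ t = mooreCompN n ℓ (fun i s => γs i (φs i (toI (s / ℓ i)))) ((∑ i, ℓ i) * t)) →
    ∃ (ε : I → α) (θ : I → I), ε ∈ X.exec ∧ IsNondecreasing θ ∧ Γ = ε ∘ θ := by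
  intro n
  induction n with
  | zero =>
    intro ℓ γs φs hℓ hγs hφs Γ hΓc hΓ
    refine ⟨γs 0, φs 0, hγs 0, hφs 0, ?_⟩
    funext t
    rw [hΓ t]
    show γs 0 (φs 0 (toI ((∑ i, ℓ i) * t / ℓ 0))) = _
    have hsum : (∑ i, ℓ i) = ℓ 0 := by simp
    rw [hsum, mul_comm, mul_div_assoc, div_self (ne_of_gt (hℓ 0)), mul_one, toI_coe]
    rfl
  | succ n ih =>
    intro ℓ γs φs hℓ hγs hφs Γ hΓc hΓ
    set L : ℝ := ∑ i, ℓ i with hLdef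
    set L' : ℝ := ∑ i : Fin (n+1), ℓ i.succ with hL'def
    have hLsplit : L = ℓ 0 + L' := by rw [hLdef, hL'def, Fin.sum_univ_succ]
    have hL'pos : 0 < L' := by
      rw [hL'def]
      exact Finset.sum_pos (fun i _ => hℓ i.succ) Finset.univ_nonempty
    have hℓ0 : 0 < ℓ 0 := hℓ 0
    have hℓ1 : 0 < ℓ 1 := hℓ 1
    have hLpos : 0 < L := by rw [hLsplit]; linarith
    set F : ℝ → α := mooreCompN (n+1) ℓ (fun i s => γs i (φs i (toI (s / ℓ i)))) with hFdef
    set Ft : ℝ → α := mooreCompN n (fun i => ℓ i.succ)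
      (fun i s => γs i.succ (φs i.succ (toI (s / ℓ i.succ)))) with hFtdef
    have hFsplit : ∀ s : ℝ, ¬ (s ≤ ℓ 0) → F s = Ft (s - ℓ 0) := by
      intro s hs
      rw [hFdef]
      show mooreComp (ℓ 0) _ _ s = _
      rw [mooreComp, if_neg hs, hFtdef]
    have hFhead : ∀ s : ℝ, s ≤ ℓ 0 → F s = γs 0 (φs 0 (toI (s / ℓ 0))) := by
      intro s hs
      rw [hFdef, mooreCompN_head _ _ _ _ hs]
    have hFthead : ∀ s : ℝ, s ≤ ℓ 1 → Ft s = γs 1 (φs 1 (toI (s / ℓ 1))) := by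
      intro s hs
      rw [hFtdef, mooreCompN_head _ _ _ s (by rw [Fin.succ_zero_eq_one]; exact hs),
        Fin.succ_zero_eq_one]
    -- junction equality via continuity
    have hjunc : γs 0 (φs 0 1) = γs 1 (φs 1 0) := by
      set t₀ : ℝ := ℓ 0 / L with ht₀def
      have ht₀0 : 0 < t₀ := by positivity
      have ht₀1 : t₀ < 1 := by
        rw [ht₀def, div_lt_one hLpos, hLsplit]
        linarith
      have hLt₀ : L * t₀ = ℓ 0 := by
        rw [ht₀def]
        field_simp
      have hΓF : ∀ x : ℝ, 0 ≤ x → x ≤ 1 → Γ (toI x) = F (L * x) := by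
        intro x h0 h1
        rw [hΓ (toI x), toI_coe_of_mem h0 h1]
      have hev : ∀ᶠ x in nhdsWithin t₀ (Set.Ioi t₀),
          Γ (toI x) = γs 1 (φs 1 (toI ((L * x - ℓ 0) / ℓ 1))) := by
        have hopen : IsOpen {x : ℝ | x < 1 ∧ L * x < ℓ 0 + ℓ 1} :=
          (isOpen_lt continuous_id continuous_const).inter
            (isOpen_lt (continuous_const.mul continuous_id) continuous_const)
        have ht₀U : t₀ ∈ {x : ℝ | x < 1 ∧ L * x < ℓ 0 + ℓ 1} := ⟨ht₀1, by rw [hLt₀]; linarith⟩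
        filter_upwards [mem_nhdsWithin_of_mem_nhds (hopen.mem_nhds ht₀U),
          self_mem_nhdsWithin] with x hxU hxt
        have hx0 : 0 ≤ x := le_of_lt (lt_trans ht₀0 (Set.mem_Ioi.mp hxt))
        have hxgt : ℓ 0 < L * x := by
          rw [← hLt₀]
          exact (mul_lt_mul_iff_right₀ hLpos).mpr (Set.mem_Ioi.mp hxt)
        rw [hΓF x hx0 (le_of_lt hxU.1), hFsplit (L * x) (by linarith),
          hFthead (L * x - ℓ 0) (by linarith [hxU.2])]
      have hfc : Continuous (fun x : ℝ => Γ (toI x)) := hΓc.comp toI_cont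
      have hgc : Continuous (fun x : ℝ => γs 1 (φs 1 (toI ((L * x - ℓ 0) / ℓ 1)))) := by
        apply (X.exec_cont _ (hγs 1)).comp
        apply ((hφs 1).2).comp
        apply toI_cont.comp
        fun_prop
      have h1 := eq_right_lim X.t2 hfc hgc hev
      beta_reduce at h1
      have hLside : Γ (toI t₀) = γs 0 (φs 0 1) := by
        rw [hΓF t₀ (le_of_lt ht₀0) (le_of_lt ht₀1), hLt₀,
          hFhead (ℓ 0) (le_refl _), div_self (ne_of_gt hℓ0), toI_one]
      have hRside : γs 1 (φs 1 (toI ((L * t₀ - ℓ 0) / ℓ 1))) = γs 1 (φs 1 0) := by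
        rw [hLt₀, sub_self, zero_div, toI_zero]
      rw [← hLside, ← hRside]
      exact h1
    -- the tail path
    set Γ' : I → α := fun u => Γ (toI ((ℓ 0 + L' * u) / L)) with hΓ'def
    have hΓ'c : Continuous Γ' := by
      rw [hΓ'def]
      exact hΓc.comp (toI_cont.comp (by fun_prop))
    have hΓ't : ∀ u : I, Γ' u = Ft (L' * u) := by
      intro u
      have hu0 : (0:ℝ) ≤ u := u.2.1
      have hu1 : (u:ℝ) ≤ 1 := u.2.2
      have hv0 : 0 ≤ (ℓ 0 + L' * u) / L := by positivity
      have hv1 : (ℓ 0 + L' * u) / L ≤ 1 := by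
        rw [div_le_one hLpos, hLsplit]
        nlinarith
      rw [hΓ'def]
      show Γ (toI ((ℓ 0 + L' * u) / L)) = _
      rw [hΓ (toI _), toI_coe_of_mem hv0 hv1]
      have hLv : L * ((ℓ 0 + L' * u) / L) = ℓ 0 + L' * u := by field_simp
      rw [hLv]
      rcases eq_or_lt_of_le (by positivity : (0:ℝ) ≤ L' * u) with h | h
      · rw [← h, add_zero, hFhead (ℓ 0) (le_refl _), div_self (ne_of_gt hℓ0),
          toI_one, hjunc, hFthead 0 (le_of_lt hℓ1)]
        norm_num [toI_zero]
      · rw [hFsplit (ℓ 0 + L' * u) (by linarith)]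
        congr 1
        ring
    obtain ⟨ε', θ', hε', hθ', hΓ'eq⟩ := ih (fun i => ℓ i.succ) (fun i => γs i.succ)
      (fun i => φs i.succ) (fun i => hℓ _) (fun i => hγs _) (fun i => hφs _) Γ' hΓ'c
      (fun u => hΓ't u)
    have hε'θ' : ∀ u : I, ε' (θ' u) = Γ' u := by
      intro u
      rw [hΓ'eq]
      rfl
    -- splice the head with the tail
    have hjun2 : γs 0 (φs 0 1) = ε' (θ' 0) := by
      rw [hε'θ' 0, hΓ't 0]
      have h0 : L' * ((0:I):ℝ) = 0 := by norm_num
      rw [h0, hFthead 0 (le_of_lt hℓ1)]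
      norm_num [toI_zero, hjunc]
    obtain ⟨ε, θ, hε, hθ, heq⟩ := splice X (γs 0) ε' (hγs 0) hε' (φs 0) θ'
      (hφs 0) hθ' hjun2
    -- the gluing reparametrization
    set sgr : ℝ → ℝ := fun x => if L * x ≤ ℓ 0 then L * x / (2 * ℓ 0)
      else 1/2 + (L * x - ℓ 0) / (2 * L') with hsgrdef
    have h2ℓ0 : (0:ℝ) < 2 * ℓ 0 := by linarith
    have h2L' : (0:ℝ) < 2 * L' := by linarith
    have hsgrmono : Monotone sgr := by
      intro x y hxy
      have hxy' : L * x ≤ L * y := by nlinarith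
      simp only [hsgrdef]
      by_cases hx : L * x ≤ ℓ 0 <;> by_cases hy : L * y ≤ ℓ 0
      · rw [if_pos hx, if_pos hy, div_le_div_iff₀ h2ℓ0 h2ℓ0]
        nlinarith
      · rw [if_pos hx, if_neg hy]
        have ha' : L * x / (2 * ℓ 0) ≤ 1/2 := by
          rw [div_le_iff₀ h2ℓ0]
          linarith
        have hb' : (0:ℝ) ≤ (L * y - ℓ 0) / (2 * L') := by
          apply div_nonneg
          · linarith [not_le.mp hy]
          · linarith
        linarith
      · exact absurd (le_trans hxy' hy) hx
      · rw [if_neg hx, if_neg hy]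
        have : (L * x - ℓ 0) / (2 * L') ≤ (L * y - ℓ 0) / (2 * L') := by
          rw [div_le_div_iff₀ h2L' h2L']
          nlinarith
        linarith
    have hsgrcont : Continuous sgr := by
      rw [hsgrdef]
      apply Continuous.if_le (by fun_prop) (by fun_prop) (by fun_prop) continuous_const
      intro x hx
      rw [hx, sub_self, zero_div, add_zero, div_eq_iff (ne_of_gt h2ℓ0)]
      ring
    set sg : I → I := fun t => toI (sgr t) with hsgdef
    have hsgmono : Monotone sg := fun s t h => toI_mono (hsgrmono h)
    have hsgcont : Continuous sg := toI_cont.comp (hsgrcont.comp continuous_subtype_val)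
    refine ⟨ε, θ ∘ sg, hε, ⟨hθ.1.comp hsgmono, hθ.2.comp hsgcont⟩, ?_⟩
    funext t
    show Γ t = ε (θ (sg t))
    have ht0 : (0:ℝ) ≤ t := t.2.1
    have ht1 : (t:ℝ) ≤ 1 := t.2.2
    have hLt0 : 0 ≤ L * t := by positivity
    have hLt1 : L * t ≤ L := by nlinarith
    have hεθ : ε (θ (sg t)) = normComp (γs 0 ∘ φs 0) (ε' ∘ θ') (sg t) :=
      (congrFun heq (sg t)).symm
    have hsgrt : sgr t = if L * t ≤ ℓ 0 then L * t / (2 * ℓ 0)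
        else 1/2 + (L * t - ℓ 0) / (2 * L') := by rw [hsgrdef]
    rw [hΓ t, hεθ, normComp]
    by_cases hc : L * (t:ℝ) ≤ ℓ 0
    · have hval : sgr t = L * t / (2 * ℓ 0) := by rw [hsgrt, if_pos hc]
      have hcoe : ((sg t : I):ℝ) = L * t / (2 * ℓ 0) := by
        show ((toI (sgr ↑t)):ℝ) = _
        rw [hval]
        apply toI_coe_of_mem
        · positivity
        · rw [div_le_one h2ℓ0]
          linarith
      have hhalf : ((sg t : I):ℝ) ≤ 1/2 := by
        rw [hcoe, div_le_iff₀ h2ℓ0]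
        linarith
      rw [if_pos hhalf]
      show F (L * ↑t) = γs 0 (φs 0 (toI (2 * ((sg t : I):ℝ))))
      rw [hFhead _ hc, hcoe]
      congr 2
      field_simp
    · push_neg at hc
      have hval : sgr t = 1/2 + (L * t - ℓ 0) / (2 * L') := by
        rw [hsgrt, if_neg (not_le.mpr hc)]
      have hnum0 : (0:ℝ) < L * t - ℓ 0 := by linarith
      have hnum1 : L * t - ℓ 0 ≤ L' := by linarith [hLsplit]
      have hcoe : ((sg t : I):ℝ) = 1/2 + (L * t - ℓ 0) / (2 * L') := by
        show ((toI (sgr ↑t)):ℝ) = _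
        rw [hval]
        apply toI_coe_of_mem
        · have : (0:ℝ) ≤ (L * t - ℓ 0) / (2 * L') := by positivity
          linarith
        · have : (L * t - ℓ 0) / (2 * L') ≤ 1/2 := by
            rw [div_le_iff₀ h2L']
            linarith
          linarith
      have hhalf : ¬ (((sg t : I):ℝ) ≤ 1/2) := by
        rw [hcoe]
        push_neg
        have : (0:ℝ) < (L * t - ℓ 0) / (2 * L') := by positivity
        linarith
      rw [if_neg hhalf]
      show F (L * ↑t) = (ε' ∘ θ') (toI (2 * ((sg t : I):ℝ) - 1))
      have harg : 2 * ((sg t : I):ℝ) - 1 = (L * t - ℓ 0) / L' := by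
        rw [hcoe]
        field_simp
        ring
      rw [harg]
      show F (L * ↑t) = ε' (θ' (toI ((L * t - ℓ 0) / L')))
      rw [hε'θ', hΓ't]
      have hcoe2 : ((toI ((L * t - ℓ 0) / L') : I) : ℝ) = (L * t - ℓ 0) / L' := by
        apply toI_coe_of_mem
        · positivity
        · rw [div_le_one hL'pos]
          linarith
      rw [hcoe2, hFsplit (L * t) (not_le.mpr hc)]
      congr 1
      field_simp

theorem cellular_dPath_iff (X : CellularMDSpace α) (Γ : I → α) (hΓ : Continuous Γ) :
    Γ ∈ dPaths X.toMultipointedDSpace ↔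
      ∃ (γ : I → α) (φ : I → I),
        (γ ∈ X.exec ∨ ∃ x : α, γ = fun _ => x) ∧ IsNondecreasing φ ∧ Γ = γ ∘ φ := by
  constructor
  · intro hΓd
    rcases hΓd with ⟨x, hx⟩ | ⟨n, ℓ, γs, φs, hℓ, hsum, hγs, hφs, hmoore⟩
    · exact ⟨fun _ => x, id, Or.inr ⟨x, rfl⟩, ⟨monotone_id, continuous_id⟩,
        funext fun t => hx t⟩
    · obtain ⟨ε, θ, hε, hθ, heqd⟩ := dPath_decomp X n ℓ γs φs hℓ hγs hφs Γ hΓ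
        (fun t => by rw [hsum, one_mul]; exact hmoore t)
      exact ⟨ε, θ, Or.inl hε, hθ, heqd⟩
  · rintro ⟨γ', φ', hmem, hφ', rfl⟩
    rcases hmem with hγ' | ⟨x, rfl⟩
    · right
      refine ⟨0, fun _ => 1, fun _ => γ', fun _ => φ', fun _ => one_pos, by simp,
        fun _ => hγ', fun _ => hφ', ?_⟩
      intro t
      show (γ' ∘ φ') t = γ' (φ' (toI ((t:ℝ) / 1)))
      rw [div_one, toI_coe]
      rfl
    · left
      exact ⟨x, fun t => rfl⟩

end
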